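/- Let G be a finite simple graph of maximum degree at most 3 and let C be a nonempty finite set of squares of G, none of which lies in the linear span (over ℤ/2ℤ) of the triangles of G, such that ⊕_{s ∈ C} s lies in the span of the triangles of G, while for every nonempty proper subset D ⊊ C the sum ⊕_{s ∈ D} s does not lie in the span of the triangles of G. Then the union of the edge sets of the squares in C forms a connected subgraph of G. -/

import Mathlib

set_option linter.unusedSectionVars false

namespace MCBI

variable {V : Type*} [Fintype V] [DecidableEq V]

/-- A *cycle* of a simple graph `G`: a set of edges of `G` such that every vertex of `G`
is incident to an even number of them. -/
def IsCycle (G : SimpleGraph V) (c : Finset (Sym2 V)) : Prop :=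
  (↑c : Set (Sym2 V)) ⊆ G.edgeSet ∧ ∀ v : V, Even (c.filter (fun e => v ∈ e)).card

/-- The `⊕`-sum (GF(2)-sum, i.e. iterated symmetric difference) of a finite set of cycles:
an edge lies in the sum iff it lies in an odd number of the cycles. -/
def cycleSum (D : Finset (Finset (Sym2 V))) : Finset (Sym2 V) :=
  Finset.univ.filter fun e => Odd (D.filter (fun c => e ∈ c)).card

/-- Linear independence over `ℤ/2ℤ`: no nonempty subset sums to the empty cycle. -/
def LinIndep (B : Finset (Finset (Sym2 V))) : Prop :=
  ∀ D ⊆ B, D.Nonempty → cycleSum D ≠ ∅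

/-- `B` spans every cycle of `G`. -/
def SpansCycles (G : SimpleGraph V) (B : Finset (Finset (Sym2 V))) : Prop :=
  ∀ c : Finset (Sym2 V), IsCycle G c → ∃ D ⊆ B, cycleSum D = c

/-- A *cycle basis* of `G`: a linearly independent set of cycles spanning every cycle of `G`. -/
def IsCycleBasis (G : SimpleGraph V) (B : Finset (Finset (Sym2 V))) : Prop :=
  (∀ c ∈ B, IsCycle G c) ∧ LinIndep B ∧ SpansCycles G B

/-- `λ_B(c, d) = 1`: the cycle `c` belongs to a subset of `B` summing to `d`
(the unique such subset when `B` is a basis). -/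
def lambdaEq1 (B : Finset (Finset (Sym2 V))) (c d : Finset (Sym2 V)) : Prop :=
  ∃ D ⊆ B, cycleSum D = d ∧ c ∈ D

/-- Total weight of a set of cycles: the sum of the numbers of edges of its cycles. -/
def weight (B : Finset (Finset (Sym2 V))) : ℕ := ∑ c ∈ B, c.card

/-- A *minimum cycle basis*: a cycle basis of minimum total weight. -/
def IsMCB (G : SimpleGraph V) (B : Finset (Finset (Sym2 V))) : Prop :=
  IsCycleBasis G B ∧
    ∀ B' : Finset (Finset (Sym2 V)), IsCycleBasis G B' → weight B ≤ weight B'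

/-- Membership in the `ℤ/2ℤ`-linear span of a set `S` of cycles. -/
def InSpan (S : Set (Finset (Sym2 V))) (c : Finset (Sym2 V)) : Prop :=
  ∃ D : Finset (Finset (Sym2 V)), (↑D : Set (Finset (Sym2 V))) ⊆ S ∧ cycleSum D = c

/-- The vertices incident to the edges of a cycle. -/
def cycVerts (c : Finset (Sym2 V)) : Finset V :=
  Finset.univ.filter fun v => ∃ e ∈ c, v ∈ e

/-- A finite set of edges forms a connected subgraph: the graph consisting of these edges
together with their endpoints is connected. -/
def EdgesConnected (E : Finset (Sym2 V)) : Prop :=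
  ((SimpleGraph.fromEdgeSet (↑E : Set (Sym2 V))).induce {v : V | ∃ e ∈ E, v ∈ e}).Connected

/-- An *elementary cycle*: a nonempty cycle whose edges form a connected subgraph in which
every incident vertex has degree exactly `2`. -/
def IsElementaryCycle (G : SimpleGraph V) (c : Finset (Sym2 V)) : Prop :=
  IsCycle G c ∧ c.Nonempty ∧
    (∀ v : V, (∃ e ∈ c, v ∈ e) → (c.filter (fun e => v ∈ e)).card = 2) ∧
    EdgesConnected c

/-- The family of independent sets of the matroid `𝓜(G)`: the sets of cycles contained
in some minimum cycle basis of `G`. -/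
def matroidIndep (G : SimpleGraph V) : Set (Finset (Finset (Sym2 V))) :=
  {D | ∃ B, IsMCB G B ∧ D ⊆ B}

/-- A set `B` of cycles of the intersection graph `G` is *feasible* for the instance
`G₁, …, G_k` if for every `i` there is a minimum cycle basis of `Gᵢ` containing `B`. -/
def Feasible {k : ℕ} (Gs : Fin k → SimpleGraph V) (G : SimpleGraph V)
    (B : Finset (Finset (Sym2 V))) : Prop :=
  (∀ c ∈ B, IsCycle G c) ∧ ∀ i : Fin k, ∃ Bi, IsMCB (Gs i) Bi ∧ B ⊆ Bi



/-- In a cycle, if a vertex is on some edge, it is on at least two. -/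
lemma second_edge {G : SimpleGraph V} {c : Finset (Sym2 V)} (hc : IsCycle G c)
    {e : Sym2 V} {v : V} (he : e ∈ c) (hv : v ∈ e) :
    ∃ f ∈ c, v ∈ f ∧ f ≠ e := by
  have h1 : 1 ≤ (c.filter (fun e => v ∈ e)).card :=
    Finset.card_pos.mpr ⟨e, Finset.mem_filter.mpr ⟨he, hv⟩⟩
  have h2 : 2 ≤ (c.filter (fun e => v ∈ e)).card := by
    obtain ⟨r, hr⟩ := hc.2 v; omega
  obtain ⟨f, hf, hfe⟩ :=
    Finset.exists_mem_ne (s := c.filter (fun e => v ∈ e)) (by omega) e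
  rw [Finset.mem_filter] at hf
  exact ⟨f, hf.1, hf.2, hfe⟩

/-- With max degree ≤ 3, a vertex on an edge of a cycle has exactly 2 edges of the cycle. -/
lemma deg_two {G : SimpleGraph V} [DecidableRel G.Adj] (hdeg : ∀ v : V, G.degree v ≤ 3)
    {c : Finset (Sym2 V)} (hc : IsCycle G c)
    {e : Sym2 V} {v : V} (he : e ∈ c) (hv : v ∈ e) :
    (c.filter (fun e => v ∈ e)).card = 2 := by
  have h1 : 1 ≤ (c.filter (fun e => v ∈ e)).card :=
    Finset.card_pos.mpr ⟨e, Finset.mem_filter.mpr ⟨he, hv⟩⟩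
  have hsub : c.filter (fun e => v ∈ e) ⊆ G.incidenceFinset v := by
    intro f hf
    rw [Finset.mem_filter] at hf
    rw [SimpleGraph.mem_incidenceFinset]
    exact ⟨hc.1 hf.1, hf.2⟩
  have h3 : (c.filter (fun e => v ∈ e)).card ≤ 3 := by
    calc (c.filter (fun e => v ∈ e)).card ≤ (G.incidenceFinset v).card :=
        Finset.card_le_card hsub
      _ = G.degree v := G.card_incidenceFinset_eq_degree v
      _ ≤ 3 := hdeg v
  obtain ⟨r, hr⟩ := hc.2 v; omega

/-- With max degree ≤ 3, two cycles sharing a vertex share an edge at that vertex. -/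
lemma share_edge {G : SimpleGraph V} [DecidableRel G.Adj] (hdeg : ∀ v : V, G.degree v ≤ 3)
    {c d : Finset (Sym2 V)} (hc : IsCycle G c) (hd : IsCycle G d)
    {v : V} {e₁ e₂ : Sym2 V} (he₁ : e₁ ∈ c) (hv₁ : v ∈ e₁) (he₂ : e₂ ∈ d) (hv₂ : v ∈ e₂) :
    ∃ e, e ∈ c ∧ e ∈ d ∧ v ∈ e := by
  set Fc := c.filter (fun e => v ∈ e) with hFc
  set Fd := d.filter (fun e => v ∈ e) with hFd
  have hc2 : Fc.card = 2 := deg_two hdeg hc he₁ hv₁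
  have hd2 : Fd.card = 2 := deg_two hdeg hd he₂ hv₂
  have hsub : Fc ∪ Fd ⊆ G.incidenceFinset v := by
    intro f hf
    rw [Finset.mem_union] at hf
    rw [SimpleGraph.mem_incidenceFinset]
    rcases hf with hf | hf <;> rw [Finset.mem_filter] at hf
    · exact ⟨hc.1 hf.1, hf.2⟩
    · exact ⟨hd.1 hf.1, hf.2⟩
  have hu : (Fc ∪ Fd).card ≤ 3 := by
    calc (Fc ∪ Fd).card ≤ (G.incidenceFinset v).card := Finset.card_le_card hsub
      _ = G.degree v := G.card_incidenceFinset_eq_degree v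
      _ ≤ 3 := hdeg v
  have hint : 1 ≤ (Fc ∩ Fd).card := by
    have := Finset.card_union_add_card_inter Fc Fd
    omega
  have hpos : 0 < (Fc ∩ Fd).card := by omega
  obtain ⟨f, hf⟩ := Finset.card_pos.mp hpos
  rw [Finset.mem_inter, hFc, hFd, Finset.mem_filter, Finset.mem_filter] at hf
  exact ⟨f, hf.1.1, hf.2.1, hf.1.2⟩

/-- A nonempty cycle has at least 3 edges. -/
lemma three_le_card {G : SimpleGraph V} {c : Finset (Sym2 V)} (hc : IsCycle G c)
    (hne : c.Nonempty) : 3 ≤ c.card := by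
  obtain ⟨e, he⟩ := hne
  have hdiag := G.not_isDiag_of_mem_edgeSet (hc.1 he)
  induction e using Sym2.ind with
  | _ a b =>
    rw [Sym2.mk_isDiag_iff] at hdiag
    obtain ⟨e₂, he₂, hae₂, he₂ne⟩ := second_edge hc he (Sym2.mem_mk_left a b)
    obtain ⟨e₃, he₃, hbe₃, he₃ne⟩ := second_edge hc he (Sym2.mem_mk_right a b)
    have h23 : e₂ ≠ e₃ := by
      intro h
      subst h
      exact he₂ne ((Sym2.mem_and_mem_iff hdiag).mp ⟨hae₂, hbe₃⟩)
    have hsub : ({s(a, b), e₂, e₃} : Finset (Sym2 V)) ⊆ c := by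
      intro f hf
      simp only [Finset.mem_insert, Finset.mem_singleton] at hf
      rcases hf with rfl | rfl | rfl <;> assumption
    have hcard : ({s(a, b), e₂, e₃} : Finset (Sym2 V)).card = 3 :=
      Finset.card_eq_three.mpr ⟨s(a, b), e₂, e₃,
        fun h => he₂ne h.symm, fun h => he₃ne h.symm, h23, rfl⟩
    calc 3 = ({s(a, b), e₂, e₃} : Finset (Sym2 V)).card := hcard.symm
      _ ≤ c.card := Finset.card_le_card hsub

/-- Any two edges of a triangle share a vertex. -/
lemma triangle_edges_meet {G : SimpleGraph V} {t : Finset (Sym2 V)} (ht : IsCycle G t)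
    (h3 : t.card = 3) {e f : Sym2 V} (he : e ∈ t) (hf : f ∈ t) :
    ∃ v, v ∈ e ∧ v ∈ f := by
  by_contra hno
  push_neg at hno
  have hef : e ≠ f := by
    intro h; subst h
    exact hno e.out.1 (Sym2.out_fst_mem e) (Sym2.out_fst_mem e)
  have hdiag := G.not_isDiag_of_mem_edgeSet (ht.1 he)
  revert he hno
  induction e using Sym2.ind with
  | _ a b =>
    intro he hno
    rw [Sym2.mk_isDiag_iff] at hdiag
    obtain ⟨e₂, he₂, hae₂, he₂ne⟩ := second_edge ht he (Sym2.mem_mk_left a b)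
    obtain ⟨e₃, he₃, hbe₃, he₃ne⟩ := second_edge ht he (Sym2.mem_mk_right a b)
    have he₂f : e₂ ≠ f := fun h => hno a (Sym2.mem_mk_left a b) (h ▸ hae₂)
    have he₃f : e₃ ≠ f := fun h => hno b (Sym2.mem_mk_right a b) (h ▸ hbe₃)
    have h23 : e₂ ≠ e₃ := by
      intro h
      subst h
      exact he₂ne ((Sym2.mem_and_mem_iff hdiag).mp ⟨hae₂, hbe₃⟩)
    have hsub : ({s(a, b), e₂, e₃} : Finset (Sym2 V)) ⊆ t := by
      intro g hg
      simp only [Finset.mem_insert, Finset.mem_singleton] at hg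
      rcases hg with rfl | rfl | rfl <;> assumption
    have hcard : ({s(a, b), e₂, e₃} : Finset (Sym2 V)).card = 3 :=
      Finset.card_eq_three.mpr ⟨s(a, b), e₂, e₃,
        fun h => he₂ne h.symm, fun h => he₃ne h.symm, h23, rfl⟩
    have heq : ({s(a, b), e₂, e₃} : Finset (Sym2 V)) = t :=
      Finset.eq_of_subset_of_card_le hsub (by omega)
    rw [← heq] at hf
    simp only [Finset.mem_insert, Finset.mem_singleton] at hf
    rcases hf with rfl | rfl | rfl
    · exact hef rfl
    · exact he₂f rfl
    · exact he₃f rfl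


/-- In a graph of maximum degree at most `3`, if `C` is a nonempty set of
squares, none spanned by the triangles, whose total `⊕`-sum is spanned by the triangles
while the `⊕`-sum of no nonempty proper subset is, then the union of the edge sets of the
squares of `C` forms a connected subgraph of `G`. -/

theorem circuit_is_connected (G : SimpleGraph V) [DecidableRel G.Adj]
    (hdeg : ∀ v : V, G.degree v ≤ 3)
    (C : Finset (Finset (Sym2 V))) (hCne : C.Nonempty)
    (hsq : ∀ s ∈ C, IsCycle G s ∧ s.card = 4 ∧
      ¬ InSpan {t : Finset (Sym2 V) | IsCycle G t ∧ t.card = 3} s)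
    (hsum : InSpan {t : Finset (Sym2 V) | IsCycle G t ∧ t.card = 3} (cycleSum C))
    (hmin : ∀ D ⊂ C, D.Nonempty →
      ¬ InSpan {t : Finset (Sym2 V) | IsCycle G t ∧ t.card = 3} (cycleSum D)) :
    EdgesConnected (C.sup id) := by
  classical
  by_contra hcon
  have hcon' : ¬ ((SimpleGraph.fromEdgeSet (↑(C.sup id) : Set (Sym2 V))).induce
      {v : V | ∃ e ∈ C.sup id, v ∈ e}).Connected := hcon
  set U : Finset (Sym2 V) := C.sup id with hUdef
  set Ws : Set V := {v : V | ∃ e ∈ U, v ∈ e} with hWdef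
  set H : SimpleGraph Ws := (SimpleGraph.fromEdgeSet (↑U : Set (Sym2 V))).induce Ws with hHdef
  have hsqcyc : ∀ s ∈ C, IsCycle G s := fun s hs => (hsq s hs).1
  have hsubU : ∀ s ∈ C, s ⊆ U := fun s hs => Finset.le_sup (f := id) hs
  have hUmem : ∀ e ∈ U, ∃ s ∈ C, e ∈ s := by
    intro e he
    simpa using Finset.mem_sup.mp he
  -- Nonemptiness of the vertex set
  obtain ⟨s₀, hs₀⟩ := hCne
  have hs₀ne : s₀.Nonempty := Finset.card_pos.mp (by rw [(hsq s₀ hs₀).2.1]; omega)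
  obtain ⟨e₀, he₀⟩ := hs₀ne
  have hv₀W : (Quot.out e₀).1 ∈ Ws := ⟨e₀, hsubU s₀ hs₀ he₀, Sym2.out_fst_mem e₀⟩
  have hHne : Nonempty Ws := ⟨⟨_, hv₀W⟩⟩
  have hnp : ¬ H.Preconnected := by
    intro hp
    exact hcon' ((SimpleGraph.connected_iff H).mpr ⟨hp, hHne⟩)
  unfold SimpleGraph.Preconnected at hnp
  push_neg at hnp
  obtain ⟨x, y, hxy⟩ := hnp
  set A : Set V := {v : V | ∃ h : v ∈ Ws, H.Reachable x ⟨v, h⟩} with hAdef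
  have hxA : (x : V) ∈ A := ⟨x.2, SimpleGraph.Reachable.refl _⟩
  have hyA : (y : V) ∉ A := by
    rintro ⟨h, hr⟩
    exact hxy hr
  -- no edge of U crosses between A and its complement
  have noncross : ∀ e ∈ U, ∀ p ∈ e, ∀ q ∈ e, p ∈ A → q ∈ A := by
    intro e heU p hp q hq hpA
    have hpW : p ∈ Ws := ⟨e, heU, hp⟩
    have hqW : q ∈ Ws := ⟨e, heU, hq⟩
    by_cases hpq : p = q
    · subst hpq; exact hpA
    · obtain ⟨hpW', hreach⟩ := hpA
      have hepq : e = s(p, q) := (Sym2.mem_and_mem_iff hpq).mp ⟨hp, hq⟩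
      have hadj : H.Adj ⟨p, hpW⟩ ⟨q, hqW⟩ := by
        show (SimpleGraph.fromEdgeSet (↑U : Set (Sym2 V))).Adj p q
        rw [SimpleGraph.fromEdgeSet_adj]
        exact ⟨hepq ▸ Finset.mem_coe.mpr heU, hpq⟩
      exact ⟨hqW, hreach.trans hadj.reachable⟩
  have edge_dichot : ∀ e ∈ U, (∀ p ∈ e, p ∈ A) ∨ (∀ p ∈ e, p ∉ A) := by
    intro e heU
    by_cases h : ∃ p ∈ e, p ∈ A
    · obtain ⟨p, hp, hpA⟩ := h
      exact Or.inl (fun q hq => noncross e heU p hp q hq hpA)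
    · push_neg at h
      exact Or.inr h
  -- every square lies entirely on one side
  have sq_dichot : ∀ s ∈ C, (∀ e ∈ s, ∀ p ∈ e, p ∈ A) ∨ (∀ e ∈ s, ∀ p ∈ e, p ∉ A) := by
    intro s hsC
    set cA := s.filter (fun e => ∀ p ∈ e, p ∈ A) with hcA
    set cB := s.filter (fun e => ¬ ∀ p ∈ e, p ∈ A) with hcB
    rw [Finset.filter_congr_decidable] at hcA hcB
    have hcycA : IsCycle G cA := by
      constructor
      · intro e he
        rw [Finset.mem_coe, hcA, Finset.mem_filter] at he
        exact (hsqcyc s hsC).1 he.1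
      · intro v
        by_cases hvA : v ∈ A
        · have hfil : cA.filter (fun e => v ∈ e) = s.filter (fun e => v ∈ e) := by
            ext e
            rw [hcA, Finset.mem_filter, Finset.mem_filter, Finset.mem_filter]
            constructor
            · rintro ⟨⟨hes, _⟩, hve⟩
              exact ⟨hes, hve⟩
            · rintro ⟨hes, hve⟩
              exact ⟨⟨hes, fun p hp => noncross e (hsubU s hsC hes) v hve p hp hvA⟩, hve⟩
          rw [hfil]
          exact (hsqcyc s hsC).2 v
        · have hfil : cA.filter (fun e => v ∈ e) = ∅ := by
            rw [Finset.filter_eq_empty_iff]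
            intro e he hve
            rw [hcA, Finset.mem_filter] at he
            exact hvA (he.2 v hve)
          rw [hfil]
          simp
    have hcycB : IsCycle G cB := by
      constructor
      · intro e he
        rw [Finset.mem_coe, hcB, Finset.mem_filter] at he
        exact (hsqcyc s hsC).1 he.1
      · intro v
        by_cases hvA : v ∈ A
        · have hfil : cB.filter (fun e => v ∈ e) = ∅ := by
            rw [Finset.filter_eq_empty_iff]
            intro e he hve
            rw [hcB, Finset.mem_filter] at he
            exact he.2 (fun p hp => noncross e (hsubU s hsC he.1) v hve p hp hvA)
          rw [hfil]
          simp
        · have hfil : cB.filter (fun e => v ∈ e) = s.filter (fun e => v ∈ e) := by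
            ext e
            rw [hcB, Finset.mem_filter, Finset.mem_filter, Finset.mem_filter]
            constructor
            · rintro ⟨⟨hes, _⟩, hve⟩
              exact ⟨hes, hve⟩
            · rintro ⟨hes, hve⟩
              exact ⟨⟨hes, fun hall => hvA (hall v hve)⟩, hve⟩
          rw [hfil]
          exact (hsqcyc s hsC).2 v
    have hcards : cA.card + cB.card = s.card :=
      by rw [hcA, hcB]; exact Finset.card_filter_add_card_filter_not _
    have hs4 : s.card = 4 := (hsq s hsC).2.1
    rcases Finset.eq_empty_or_nonempty cA with hA0 | hAne
    · right
      intro e hes p hp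
      rcases edge_dichot e (hsubU s hsC hes) with hall | hnone
      · exact absurd (hcA ▸ Finset.mem_filter.mpr ⟨hes, hall⟩ : e ∈ cA)
          (by rw [hA0]; exact Finset.notMem_empty e)
      · exact hnone p hp
    · rcases Finset.eq_empty_or_nonempty cB with hB0 | hBne
      · left
        intro e hes
        by_cases h : ∀ p ∈ e, p ∈ A
        · exact h
        · exact absurd (hcB ▸ Finset.mem_filter.mpr ⟨hes, h⟩ : e ∈ cB)
            (by rw [hB0]; exact Finset.notMem_empty e)
      · have h3A := three_le_card hcycA hAne
        have h3B := three_le_card hcycB hBne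
        omega
  -- the decomposition of C
  obtain ⟨D, hDsub, hDsum⟩ := hsum
  have hDtri : ∀ t ∈ D, IsCycle G t ∧ t.card = 3 := fun t ht => hDsub (Finset.mem_coe.mpr ht)
  set D₁ := D.filter (fun t => ∃ e ∈ t, ∃ p ∈ e, p ∈ A) with hD₁
  set C₁ := C.filter (fun s => ∀ e ∈ s, ∀ p ∈ e, p ∈ A) with hC₁
  -- every edge of a triangle in D₁ has an endpoint in A
  have hT : ∀ t ∈ D₁, ∀ f ∈ t, ∃ p ∈ f, p ∈ A := by
    intro t ht f hf
    rw [hD₁, Finset.mem_filter] at ht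
    obtain ⟨htD, e, het, v, hve, hvA⟩ := ht
    have hvW : v ∈ Ws := hvA.1
    obtain ⟨e', he'U, hve'⟩ := hvW
    obtain ⟨s, hsC, he's⟩ := hUmem e' he'U
    obtain ⟨g, hgs, hgt, hvg⟩ :=
      share_edge hdeg (hsqcyc s hsC) (hDtri t htD).1 he's hve' het hve
    have hgU : g ∈ U := hsubU s hsC hgs
    obtain ⟨w, hwf, hwg⟩ :=
      triangle_edges_meet (hDtri t htD).1 (hDtri t htD).2 hf hgt
    exact ⟨w, hwf, noncross g hgU v hvg w hwg hvA⟩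
  -- C₁ is a nonempty proper subset of C
  have hC₁ne : C₁.Nonempty := by
    obtain ⟨e, heU, hxe⟩ := x.2
    obtain ⟨s, hsC, hes⟩ := hUmem e heU
    rcases sq_dichot s hsC with hall | hnone
    · exact ⟨s, hC₁ ▸ Finset.mem_filter.mpr ⟨hsC, hall⟩⟩
    · exact absurd hxA (hnone e hes _ hxe)
  have hC₁ssub : C₁ ⊂ C := by
    rw [Finset.ssubset_iff_of_subset (hC₁ ▸ Finset.filter_subset _ C)]
    obtain ⟨e, heU, hye⟩ := y.2
    obtain ⟨s, hsC, hes⟩ := hUmem e heU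
    refine ⟨s, hsC, fun hmem => ?_⟩
    rw [hC₁, Finset.mem_filter] at hmem
    exact hyA (hmem.2 e hes _ hye)
  -- the key identity
  have hkey : cycleSum D₁ = cycleSum C₁ := by
    ext e
    simp only [cycleSum, Finset.mem_filter, Finset.mem_univ, true_and]
    by_cases hcase : ∃ p ∈ e, p ∈ A
    · obtain ⟨v, hve, hvA⟩ := hcase
      have hDfil : D₁.filter (fun c => e ∈ c) = D.filter (fun c => e ∈ c) := by
        apply Finset.Subset.antisymm
        · exact Finset.filter_subset_filter _ (hD₁ ▸ Finset.filter_subset _ D)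
        · intro t ht
          rw [Finset.mem_filter] at ht
          exact Finset.mem_filter.mpr
            ⟨hD₁ ▸ Finset.mem_filter.mpr ⟨ht.1, e, ht.2, v, hve, hvA⟩, ht.2⟩
      have hCfil : C₁.filter (fun c => e ∈ c) = C.filter (fun c => e ∈ c) := by
        apply Finset.Subset.antisymm
        · exact Finset.filter_subset_filter _ (hC₁ ▸ Finset.filter_subset _ C)
        · intro s hs
          rw [Finset.mem_filter] at hs
          rcases sq_dichot s hs.1 with hall | hnone
          · exact Finset.mem_filter.mpr ⟨hC₁ ▸ Finset.mem_filter.mpr ⟨hs.1, hall⟩, hs.2⟩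
          · exact absurd hvA (hnone e hs.2 v hve)
      rw [hDfil, hCfil]
      have hmemD : e ∈ cycleSum D ↔ Odd (D.filter (fun c => e ∈ c)).card := by
        simp [cycleSum]
      have hmemC : e ∈ cycleSum C ↔ Odd (C.filter (fun c => e ∈ c)).card := by
        simp [cycleSum]
      rw [← hmemD, ← hmemC, hDsum]
    · push_neg at hcase
      have hD0 : D₁.filter (fun c => e ∈ c) = ∅ := by
        rw [Finset.filter_eq_empty_iff]
        intro t ht het
        obtain ⟨p, hpe, hpA⟩ := hT t ht e het
        exact hcase p hpe hpA
      have hC0 : C₁.filter (fun c => e ∈ c) = ∅ := by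
        rw [Finset.filter_eq_empty_iff]
        intro s hs hes
        rw [hC₁, Finset.mem_filter] at hs
        exact hcase (Quot.out e).1 (Sym2.out_fst_mem e)
          (hs.2 e hes (Quot.out e).1 (Sym2.out_fst_mem e))
      rw [hD0, hC0]
  -- contradiction with minimality
  refine hmin C₁ hC₁ssub hC₁ne ⟨D₁, ?_, hkey⟩
  intro t ht
  exact hDsub (Finset.mem_coe.mpr ((hD₁ ▸ Finset.filter_subset _ D) (Finset.mem_coe.mp ht)))

end MCBI
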